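/- Let A = diag(a₁,…,aₙ) with 0 < a₁ < ⋯ < aₙ and let X₀ = diag(ε₁,…,εₙ), εᵢ = ±1, be a critical point of f_A on O(n). In the exponential chart B ↦ X₀·exp(B), B skew-symmetric, the second-order term of f_A(X₀ exp B) - f_A(X₀) equals -∑_{1 ≤ i < j ≤ n} (aᵢεᵢ + aⱼεⱼ)·bᵢⱼ², and in particular the Hessian of f_A at X₀ is nondegenerate with index ∑_{k: ε_k = 1} (k-1). -/

import Mathlib

open Matrix

private lemma coeffSignNeg {n : ℕ} (a ε : Fin n → ℝ) (hpos : ∀ i, 0 < a i)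
    (hmono : StrictMono a) (hε : ∀ i, ε i = 1 ∨ ε i = -1) {i j : Fin n} (hij : i < j)
    (hj : ε j = -1) : a i * ε i + a j * ε j < 0 := by
  have hlt := hmono hij
  have h1 := hpos i
  have h2 := hpos j
  rcases hε i with hi | hi <;> rw [hi, hj] <;> nlinarith

private lemma coeffSignPos {n : ℕ} (a ε : Fin n → ℝ) (hpos : ∀ i, 0 < a i)
    (hmono : StrictMono a) (hε : ∀ i, ε i = 1 ∨ ε i = -1) {i j : Fin n} (hij : i < j) :
    (0 < a i * ε i + a j * ε j ↔ ε j = 1) := by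
  have hlt := hmono hij
  have h1 := hpos i
  have h2 := hpos j
  constructor
  · intro h
    by_contra hj'
    have hj : ε j = -1 := (hε j).resolve_left hj'
    have := coeffSignNeg a ε hpos hmono hε hij hj
    linarith
  · intro hj
    rcases hε i with hi | hi <;> rw [hi, hj] <;> nlinarith

/-- At a critical point `X₀ = diag (ε₁, …, εₙ)` of `f_A`, `A = diag (a₁, …, aₙ)` with
`0 < a₁ < ⋯ < aₙ`, the quadratic (second-order) term of
`f_A(X₀ exp B) - f_A(X₀)` in the skew-symmetric coordinate `B`, namely
`Tr (A X₀ B²)` (up to the overall factor `1/2`), equals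
`-∑_{i<j} (aᵢ εᵢ + aⱼ εⱼ) bᵢⱼ²`; in particular all coefficients
`aᵢ εᵢ + aⱼ εⱼ` (`i < j`) are nonzero, so the Hessian is nondegenerate, and its
index — the number of pairs `i < j` with `aᵢ εᵢ + aⱼ εⱼ > 0` — equals
`∑_{k : ε_k = 1} (k - 1)` (with `1`-based indexing; here `Fin n` is `0`-based, so
the summand is `(k : ℕ)`). -/
theorem hessian_of_height_function (n : ℕ)
    (a ε : Fin n → ℝ) (hpos : ∀ i, 0 < a i) (hmono : StrictMono a)
    (hε : ∀ i, ε i = 1 ∨ ε i = -1) :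
    (∀ B : Matrix (Fin n) (Fin n) ℝ, Bᵀ = -B →
      (Matrix.diagonal a * Matrix.diagonal ε * (B * B)).trace =
        -∑ p ∈ Finset.univ.filter (fun p : Fin n × Fin n => p.1 < p.2),
            (a p.1 * ε p.1 + a p.2 * ε p.2) * (B p.1 p.2) ^ 2) ∧
    (∀ i j : Fin n, i < j → a i * ε i + a j * ε j ≠ 0) ∧
    (Finset.univ.filter
        (fun p : Fin n × Fin n => p.1 < p.2 ∧ 0 < a p.1 * ε p.1 + a p.2 * ε p.2)).card =
      ∑ k ∈ Finset.univ.filter (fun k : Fin n => ε k = 1), (k : ℕ) := by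
  refine ⟨?_, ?_, ?_⟩
  · intro B hB
    have hskew : ∀ i j, B j i = -B i j := by
      intro i j
      have := congrFun (congrFun hB i) j
      simpa [Matrix.transpose_apply] using this
    have hdiag : ∀ i, B i i = 0 := by
      intro i
      have := hskew i i
      linarith
    have h1 : (Matrix.diagonal a * Matrix.diagonal ε * (B * B)).trace =
        ∑ i, ∑ k, (a i * ε i) * (B i k * B k i) := by
      rw [Matrix.diagonal_mul_diagonal, Matrix.trace]
      simp [Matrix.diag, Matrix.mul_apply, Matrix.diagonal_apply, ite_mul, zero_mul,
        Finset.mul_sum, mul_assoc]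
    rw [h1]
    have h2 : ∀ i k, (a i * ε i) * (B i k * B k i) = -((a i * ε i) * (B i k) ^ 2) := by
      intro i k; rw [hskew i k]; ring
    simp_rw [h2, Finset.sum_neg_distrib, neg_inj]
    rw [← Finset.sum_product', Finset.univ_product_univ]
    -- split the square into upper, lower, diagonal
    have hsplit : (Finset.univ : Finset (Fin n × Fin n)) =
        (Finset.univ.filter (fun p : Fin n × Fin n => p.1 < p.2)) ∪
        ((Finset.univ.filter (fun p : Fin n × Fin n => p.2 < p.1)) ∪
         (Finset.univ.filter (fun p : Fin n × Fin n => p.1 = p.2))) := by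
      ext p
      simp only [Finset.mem_union, Finset.mem_filter, Finset.mem_univ, true_and]
      constructor
      · intro _; rcases lt_trichotomy p.1 p.2 with h | h | h <;> tauto
      · tauto
    conv_lhs => rw [hsplit]
    rw [Finset.sum_union, Finset.sum_union]
    · have hd : ∑ p ∈ Finset.univ.filter (fun p : Fin n × Fin n => p.1 = p.2),
          (a p.1 * ε p.1) * (B p.1 p.2) ^ 2 = 0 := by
        apply Finset.sum_eq_zero
        intro p hp
        simp only [Finset.mem_filter] at hp
        rw [← hp.2, hdiag]; ring
      have hswap : ∑ p ∈ Finset.univ.filter (fun p : Fin n × Fin n => p.2 < p.1),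
          (a p.1 * ε p.1) * (B p.1 p.2) ^ 2 =
          ∑ p ∈ Finset.univ.filter (fun p : Fin n × Fin n => p.1 < p.2),
          (a p.2 * ε p.2) * (B p.1 p.2) ^ 2 := by
        apply Finset.sum_nbij' (fun p => (p.2, p.1)) (fun p => (p.2, p.1)) <;>
          intro p hp <;> simp only [Finset.mem_filter, Finset.mem_univ, true_and] at hp ⊢ <;>
          first
            | exact hp
            | rfl
            | (rw [hskew p.2 p.1]; ring)
      rw [hd, hswap, add_zero, ← Finset.sum_add_distrib]
      apply Finset.sum_congr rfl
      intro p _; ring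
    · rw [Finset.disjoint_filter]
      intro p _ h1 h2
      first
        | exact lt_asymm h1 h2
        | exact absurd h2 (ne_of_gt h1)
        | exact absurd h2 (ne_of_lt h1)
    · rw [Finset.disjoint_union_right]
      refine ⟨?_, ?_⟩ <;> rw [Finset.disjoint_filter] <;> intro p _ h1 h2 <;>
        first
          | exact lt_asymm h1 h2
          | exact absurd h2 (ne_of_gt h1)
          | exact absurd h2 (ne_of_lt h1)
  · intro i j hij
    rcases hε j with hj | hj
    · exact ne_of_gt ((coeffSignPos a ε hpos hmono hε hij).mpr hj)
    · exact ne_of_lt (coeffSignNeg a ε hpos hmono hε hij hj)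
  · have hcongr : (Finset.univ.filter
        (fun p : Fin n × Fin n => p.1 < p.2 ∧ 0 < a p.1 * ε p.1 + a p.2 * ε p.2)) =
        (Finset.univ.filter (fun p : Fin n × Fin n => p.1 < p.2 ∧ ε p.2 = 1)) := by
      apply Finset.filter_congr
      intro p _
      constructor
      · rintro ⟨h1, h2⟩; exact ⟨h1, (coeffSignPos a ε hpos hmono hε h1).mp h2⟩
      · rintro ⟨h1, h2⟩; exact ⟨h1, (coeffSignPos a ε hpos hmono hε h1).mpr h2⟩
    rw [hcongr]
    rw [Finset.card_eq_sum_card_fiberwise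
      (f := fun p : Fin n × Fin n => p.2)
      (t := Finset.univ.filter (fun k : Fin n => ε k = 1))
      (by intro p hp; simp only [Finset.mem_coe, Finset.mem_filter] at hp ⊢; exact ⟨Finset.mem_univ _, hp.2.2⟩)]
    apply Finset.sum_congr rfl
    intro j hj
    simp only [Finset.mem_filter, Finset.mem_univ, true_and] at hj
    have himg : (Finset.univ.filter (fun p : Fin n × Fin n => p.1 < p.2 ∧ ε p.2 = 1)).filter
        (fun p => p.2 = j) =
        (Finset.Iio j).image (fun i => (i, j)) := by
      ext ⟨x, y⟩
      simp only [Finset.mem_filter, Finset.mem_univ, true_and, Finset.mem_image,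
        Finset.mem_Iio, Prod.mk.injEq]
      constructor
      · rintro ⟨⟨h1, _⟩, rfl⟩
        exact ⟨x, h1, rfl, rfl⟩
      · rintro ⟨i, hi, rfl, rfl⟩
        exact ⟨⟨hi, hj⟩, rfl⟩
    rw [himg, Finset.card_image_of_injective _ (fun x y h => by simpa using h),
      Fin.card_Iio]
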